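/- Let r†, x†, b† be nonzero real numbers and δ_r, δ_x, δ_b real numbers, and define f_W : ℝ → ℂ by f_W(m) = (1 − x†(1+δ_x m)·b†(1+δ_b m)) + i·r†(1+δ_r m)·b†(1+δ_b m). Let m1, m2 be real numbers such that it is NOT the case that both δ_x + δ_b + δ_x δ_b (m1+m2) = 0 and δ_r + δ_b + δ_r δ_b (m1+m2) = 0. Then f_W(m1) = f_W(m2) if and only if m1 = m2. (Theorem 1 of the paper, with the paper's probability-zero exceptional scenario excluded by an explicit hypothesis.) -/
import Mathlib


/-- The function `f_W(m) = (1 − x†(1+δ_x m)·b†(1+δ_b m)) + i·r†(1+δ_r m)·b†(1+δ_b m)`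
modeling `W_pq = 1 + z_pq·b_pq` for line parameters in bin `m`. -/
noncomputable def fW (rd xd bd δr δx δb : ℝ) (m : ℝ) : ℂ :=
  ((1 - xd * (1 + δx * m) * (bd * (1 + δb * m)) : ℝ) : ℂ) +
    Complex.I * ((rd * (1 + δr * m) * (bd * (1 + δb * m)) : ℝ) : ℂ)

/-- Theorem 1 of the paper: with the probability-zero exceptional scenario excluded,
`f_W(m1) = f_W(m2)` iff `m1 = m2`. -/
theorem fW_eq_iff (rd xd bd δr δx δb : ℝ)
    (hrd : rd ≠ 0) (hxd : xd ≠ 0) (hbd : bd ≠ 0) (m1 m2 : ℝ)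
    (hexc : ¬ (δx + δb + δx * δb * (m1 + m2) = 0 ∧
               δr + δb + δr * δb * (m1 + m2) = 0)) :
    fW rd xd bd δr δx δb m1 = fW rd xd bd δr δx δb m2 ↔ m1 = m2 := by
  constructor
  · intro h
    by_contra hne
    apply hexc
    have hm : m1 - m2 ≠ 0 := sub_ne_zero.mpr hne
    rw [Complex.ext_iff] at h
    simp only [fW, Complex.add_re, Complex.add_im, Complex.ofReal_re, Complex.ofReal_im,
      Complex.mul_re, Complex.mul_im, Complex.I_re, Complex.I_im] at h
    obtain ⟨h1, h2⟩ := h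
    constructor
    · have key : xd * bd * ((m1 - m2) * (δx + δb + δx * δb * (m1 + m2))) = 0 := by
        ring_nf
        ring_nf at h1
        linarith
      rcases mul_eq_zero.mp key with h | h
      · exact absurd h (mul_ne_zero hxd hbd)
      · rcases mul_eq_zero.mp h with h | h
        · exact absurd h hm
        · exact h
    · have key : rd * bd * ((m1 - m2) * (δr + δb + δr * δb * (m1 + m2))) = 0 := by
        ring_nf
        ring_nf at h2
        linarith
      rcases mul_eq_zero.mp key with h | h
      · exact absurd h (mul_ne_zero hrd hbd)
      · rcases mul_eq_zero.mp h with h | h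
        · exact absurd h hm
        · exact h
  · rintro rfl; rfl
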